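/- Let G be a simple graph on n ≥ 4 vertices with m edges. If m ≥ 3n + 9, then the sum of the 3 largest Laplacian eigenvalues of G satisfies μ₁ + μ₂ + μ₃ ≤ m + 6, i.e., Brouwer's conjecture holds for k = 3. -/

import Mathlib

open Finset Matrix

lemma lap_eig_le {n : ℕ} (G : SimpleGraph (Fin n)) [DecidableRel G.Adj]
    (hL : (G.lapMatrix ℝ).IsHermitian) (i : Fin n) :
    hL.eigenvalues i ≤ (n : ℝ) := by
  set v : Fin n → ℝ := ⇑(hL.eigenvectorBasis i) with hv
  have hnorm : ∑ j, v j * v j = 1 := by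
    have h := hL.eigenvectorBasis.orthonormal.1 i
    rw [norm_eq_sqrt_real_inner, Real.sqrt_eq_one] at h
    rw [PiLp.inner_apply] at h
    simpa [v, ← sq] using h
  have hev : G.lapMatrix ℝ *ᵥ v = hL.eigenvalues i • v := hL.mulVec_eigenvectorBasis i
  have hq : v ⬝ᵥ (G.lapMatrix ℝ *ᵥ v) = hL.eigenvalues i := by
    rw [hev, dotProduct_smul, smul_eq_mul]
    simp [dotProduct, hnorm]
  have hq2 : v ⬝ᵥ (G.lapMatrix ℝ *ᵥ v) =
      (∑ a, ∑ b, if G.Adj a b then (v a - v b)^2 else 0) / 2 := by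
    rw [← Matrix.toLinearMap₂'_apply', SimpleGraph.lapMatrix_toLinearMap₂']
  have hbound : (∑ a, ∑ b, if G.Adj a b then (v a - v b)^2 else 0) / 2 ≤ (n : ℝ) := by
    have h1 : (∑ a, ∑ b, if G.Adj a b then (v a - v b)^2 else 0) ≤
        ∑ a, ∑ b : Fin n, (v a - v b)^2 := by
      apply Finset.sum_le_sum; intro a _
      apply Finset.sum_le_sum; intro b _
      split
      · exact le_refl _
      · positivity
    have expand : ∀ a : Fin n, ∑ b : Fin n, (v a - v b)^2 =
        (n : ℝ) * (v a * v a) - 2 * (v a * ∑ j, v j) + ∑ j, v j * v j := by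
      intro a
      calc ∑ b : Fin n, (v a - v b)^2
          = ∑ b : Fin n, (v a * v a - 2 * (v a * v b) + v b * v b) := by
            apply Finset.sum_congr rfl; intros; ring
        _ = (∑ _b : Fin n, v a * v a) - 2 * ∑ b, v a * v b + ∑ b, v b * v b := by
            rw [Finset.sum_add_distrib, Finset.sum_sub_distrib, Finset.mul_sum]
        _ = (n : ℝ) * (v a * v a) - 2 * (v a * ∑ j, v j) + ∑ j, v j * v j := by
            rw [Finset.sum_const, Finset.card_univ, Fintype.card_fin, nsmul_eq_mul,
              ← Finset.mul_sum]
    have h2 : ∑ a, ∑ b : Fin n, (v a - v b)^2 =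
        2 * (n : ℝ) - 2 * (∑ j, v j)^2 := by
      simp_rw [expand]
      rw [Finset.sum_add_distrib, Finset.sum_sub_distrib, ← Finset.mul_sum, hnorm,
        Finset.sum_const, Finset.card_univ, Fintype.card_fin, nsmul_eq_mul,
        ← Finset.mul_sum, ← Finset.sum_mul]
      ring
    have h3 : (0:ℝ) ≤ (∑ j, v j)^2 := sq_nonneg _
    nlinarith
  linarith [hq.symm.trans_le (hq2 ▸ hbound)]

/-- For a simple graph on `n ≥ 4` vertices with `m ≥ 3n + 9`
edges, the sum of the three largest Laplacian eigenvalues is at most `m + 6`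
(Brouwer's conjecture for `k = 3`). -/
theorem stmt18 {n : ℕ} (hn : 4 ≤ n) (G : SimpleGraph (Fin n)) [DecidableRel G.Adj]
    (m : ℕ) (hm : m = G.edgeFinset.card) (hm3 : 3 * n + 9 ≤ m)
    (hL : (G.lapMatrix ℝ).IsHermitian)
    (mu : Fin n → ℝ) (σ : Equiv.Perm (Fin n))
    (hmu : mu = hL.eigenvalues ∘ σ) (hdec : Antitone mu) :
    mu ⟨0, by omega⟩ + mu ⟨1, by omega⟩ + mu ⟨2, by omega⟩ ≤ (m : ℝ) + 6 := by
  have hb : ∀ j : Fin n, mu j ≤ (n : ℝ) := by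
    intro j; rw [hmu]; exact lap_eig_le G hL (σ j)
  have hcast : (3 * n + 9 : ℝ) ≤ (m : ℝ) := by exact_mod_cast hm3
  have := hb ⟨0, by omega⟩
  have := hb ⟨1, by omega⟩
  have := hb ⟨2, by omega⟩
  push_cast at hcast ⊢
  linarith
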